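/- (Partial spread vectorial bent, b orthogonal to one subspace) In the vectorial PS⁻ construction, suppose b ∈ V is nonzero and there is exactly one subspace U₀ ∈ S (in the preimage of γ₀ ∈ B, γ₀ ≠ 0) with b·x = 0 for all x ∈ U₀. Then for every nontrivial character χ of B, ∑_{x ∈ V} χ(f(x)) (-1)^{b·x} = 2^m · χ(γ₀); in particular this sum has absolute value 2^m. -/

import Mathlib

open Finset

lemma sign_add_aux (a c : ZMod 2) :
    (-1 : ℂ) ^ ((a + c).val) = (-1) ^ a.val * (-1) ^ c.val := by
  rw [ZMod.val_add, ← neg_one_pow_eq_pow_mod_two, pow_add]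

lemma zmod2_ne_zero (a : ZMod 2) (h : a ≠ 0) : a = 1 := by
  revert a; decide

/-- Vectorial PS⁻ construction, `b` orthogonal to exactly one spread member `U₀`
(in the preimage of `γ₀ ≠ 0`): then `∑_x χ(f x)(-1)^{b·x} = 2^m·χ(γ₀)`, which has
absolute value `2^m`. -/
theorem stmt_15 (m k : ℕ) (hkpos : 0 < k) (hkm : k ≤ m)
    (B : Type*) [AddCommGroup B] [Fintype B] [DecidableEq B] (hB : Fintype.card B = 2 ^ k)
    (S : Fin ((2 ^ k - 1) * 2 ^ (m - k)) → Submodule (ZMod 2) (Fin (2 * m) → ZMod 2))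
    (hScard : ∀ i, Nat.card (S i) = 2 ^ m)
    (hSdisj : ∀ i j, i ≠ j → S i ⊓ S j = ⊥)
    (g : Fin ((2 ^ k - 1) * 2 ^ (m - k)) → B)
    (hg0 : ∀ i, g i ≠ 0)
    (hgcount : ∀ γ : B, γ ≠ 0 →
      (Finset.univ.filter (fun i => g i = γ)).card = 2 ^ (m - k))
    (f : (Fin (2 * m) → ZMod 2) → B)
    (hf1 : ∀ i, ∀ x ∈ S i, x ≠ 0 → f x = g i)
    (hf2 : ∀ x, (∀ i, x ∉ S i) → f x = 0)
    (hf3 : f 0 = 0)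
    (χ : AddChar B ℂ) (hχ : ∃ γ : B, χ γ ≠ 1)
    (b : Fin (2 * m) → ZMod 2) (hb : b ≠ 0)
    (i₀ : Fin ((2 ^ k - 1) * 2 ^ (m - k))) (γ₀ : B) (hγ₀ : γ₀ = g i₀)
    (hi₀ : ∀ x ∈ S i₀, ∑ j, b j * x j = 0)
    (hother : ∀ i, i ≠ i₀ → ∃ x ∈ S i, ∑ j, b j * x j ≠ 0) :
    (∑ x : Fin (2 * m) → ZMod 2, χ (f x) * (-1 : ℂ) ^ (∑ j, b j * x j).val =
        2 ^ m * χ γ₀) ∧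
    ‖(∑ x : Fin (2 * m) → ZMod 2,
        χ (f x) * (-1 : ℂ) ^ (∑ j, b j * x j).val)‖ = 2 ^ m := by
  classical
  set e : (Fin (2 * m) → ZMod 2) → ℂ := fun x => (-1 : ℂ) ^ (∑ j, b j * x j).val with he
  -- additivity of e
  have emul : ∀ x y : (Fin (2 * m) → ZMod 2), e (x + y) = e x * e y := by
    intro x y
    have hsum : (∑ j, b j * (x + y) j) = (∑ j, b j * x j) + (∑ j, b j * y j) := by
      rw [← Finset.sum_add_distrib]
      refine Finset.sum_congr rfl fun j _ => ?_
      change b j * (x j + y j) = b j * x j + b j * y j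
      ring
    simp only [he, hsum, sign_add_aux]
  have e0 : e 0 = 1 := by
    have h0 : (∑ j, b j * (0 : (Fin (2 * m) → ZMod 2)) j) = 0 := by simp
    rw [he]
    simp only [h0, show ZMod.val (0 : ZMod 2) = 0 from rfl, pow_zero]
  have eneg : ∀ x : (Fin (2 * m) → ZMod 2), (∑ j, b j * x j) ≠ 0 → e x = -1 := by
    intro x hx
    have h1 : (∑ j, b j * x j) = 1 := zmod2_ne_zero _ hx
    simp [he, h1, show ZMod.val (1 : ZMod 2) = 1 from rfl]
  have eone : ∀ x : (Fin (2 * m) → ZMod 2), (∑ j, b j * x j) = 0 → e x = 1 := by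
    intro x hx; simp [he, hx, show ZMod.val (0 : ZMod 2) = 0 from rfl]
  have addself : ∀ x : (Fin (2 * m) → ZMod 2), x + x = 0 := by
    intro x; funext j
    have h2 : ∀ v : ZMod 2, v + v = 0 := by decide
    show x j + x j = (0 : ZMod 2)
    exact h2 (x j)
  -- shift lemma
  have shift : ∀ (T : Finset (Fin (2 * m) → ZMod 2)) (x₀ : (Fin (2 * m) → ZMod 2)), (∀ x, x ∈ T ↔ x + x₀ ∈ T) → e x₀ = -1 →
      ∑ x ∈ T, e x = 0 := by
    intro T x₀ hT hx₀
    have key : ∑ x ∈ T, e (x + x₀) = ∑ x ∈ T, e x := by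
      refine Finset.sum_nbij' (fun x => x + x₀) (fun x => x + x₀) ?_ ?_ ?_ ?_ ?_
      · intro a ha; exact (hT a).1 ha
      · intro a ha
        have h5 := (hT (a + x₀)).2
        rw [add_assoc, addself, add_zero] at h5
        exact h5 ha
      · intro a _; show a + x₀ + x₀ = a; rw [add_assoc, addself, add_zero]
      · intro a _; show a + x₀ + x₀ = a; rw [add_assoc, addself, add_zero]
      · intro a _; rfl
    have key2 : ∑ x ∈ T, e (x + x₀) = -∑ x ∈ T, e x := by
      simp only [emul, hx₀]; rw [← Finset.sum_mul]; ring
    have : (2 : ℂ) * ∑ x ∈ T, e x = 0 := by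
      rw [key2] at key; linear_combination -key
    have h2 : (2 : ℂ) ≠ 0 := by norm_num
    exact (mul_eq_zero.1 this).resolve_left h2
  -- full-space sum is zero
  obtain ⟨j₀, hj₀⟩ : ∃ j, b j ≠ 0 := by
    by_contra h
    push_neg at h
    apply hb
    funext j
    simpa using h j
  have hx₁ : (∑ j, b j * (Pi.single j₀ 1 : Fin (2 * m) → ZMod 2) j) = b j₀ := by
    rw [Finset.sum_eq_single j₀]
    · simp
    · intro j _ hj; simp [Pi.single_eq_of_ne hj]
    · simp
  have hfull : ∑ x : (Fin (2 * m) → ZMod 2), e x = 0 := by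
    refine shift Finset.univ (Pi.single j₀ 1 : Fin (2 * m) → ZMod 2) (fun x => by simp) ?_
    refine eneg _ ?_
    rw [hx₁]; exact hj₀
  -- the finsets T i
  set T : Fin ((2 ^ k - 1) * 2 ^ (m - k)) → Finset (Fin (2 * m) → ZMod 2) :=
    fun i => Finset.univ.filter (fun x => x ∈ S i) with hTdef
  have hmemT : ∀ i x, x ∈ T i ↔ x ∈ S i := by
    intro i x; simp [hTdef]
  have hTcard : ∀ i, (T i).card = 2 ^ m := by
    intro i
    have h1 := hScard i
    have h2 : Nat.card (S i) = (T i).card := by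
      rw [hTdef]
      rw [Nat.card_eq_fintype_card]
      exact Fintype.card_subtype _
    rw [← h2, h1]
  have h0T : ∀ i, (0 : (Fin (2 * m) → ZMod 2)) ∈ T i := fun i => (hmemT i 0).2 (zero_mem _)
  -- sum over T i₀
  have hTi₀ : ∑ x ∈ T i₀, e x = (2 : ℂ) ^ m := by
    rw [Finset.sum_congr rfl (fun x hx => eone x (hi₀ x ((hmemT i₀ x).1 hx)))]
    simp [hTcard i₀]
  -- sum over other T i
  have hTi : ∀ i, i ≠ i₀ → ∑ x ∈ T i, e x = 0 := by
    intro i hi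
    obtain ⟨x₀, hx₀S, hx₀⟩ := hother i hi
    refine shift (T i) x₀ ?_ (eneg _ hx₀)
    intro x
    constructor
    · intro hx; exact (hmemT i _).2 (add_mem ((hmemT i x).1 hx) hx₀S)
    · intro hx
      have := add_mem ((hmemT i _).1 hx) hx₀S
      rw [add_assoc, addself, add_zero] at this
      exact (hmemT i x).2 this
  -- main decomposition
  have split : ∑ x : (Fin (2 * m) → ZMod 2), χ (f x) * e x
      = ∑ x : (Fin (2 * m) → ZMod 2), e x + ∑ x : (Fin (2 * m) → ZMod 2), (χ (f x) - 1) * e x := by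
    rw [← Finset.sum_add_distrib]
    refine Finset.sum_congr rfl fun x _ => ?_; ring
  -- the second sum restricted to the union
  set U : Finset (Fin (2 * m) → ZMod 2) := Finset.univ.biUnion (fun i => (T i).erase 0) with hU
  have hnotU : ∀ x : (Fin (2 * m) → ZMod 2), x ∉ U → χ (f x) - 1 = 0 := by
    intro x hx
    have hfx : f x = 0 := by
      by_cases hx0 : x = 0
      · rw [hx0]; exact hf3
      · refine hf2 x fun i hxi => ?_
        exact hx (Finset.mem_biUnion.2 ⟨i, Finset.mem_univ i,
          Finset.mem_erase.2 ⟨hx0, (hmemT i x).2 hxi⟩⟩)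
    rw [hfx, AddChar.map_zero_eq_one, sub_self]
  have hrestrict : ∑ x : (Fin (2 * m) → ZMod 2), (χ (f x) - 1) * e x = ∑ x ∈ U, (χ (f x) - 1) * e x := by
    refine (Finset.sum_subset (Finset.subset_univ U) ?_).symm
    intro x _ hx
    rw [hnotU x hx, zero_mul]
  have hdisj : ∀ i ∈ (Finset.univ : Finset (Fin ((2 ^ k - 1) * 2 ^ (m - k)))), ∀ j ∈ (Finset.univ : Finset (Fin ((2 ^ k - 1) * 2 ^ (m - k)))),
      i ≠ j → Disjoint ((T i).erase 0) ((T j).erase 0) := by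
    intro i _ j _ hij
    rw [Finset.disjoint_left]
    intro x hxi hxj
    have hx0 : x ≠ 0 := (Finset.mem_erase.1 hxi).1
    have h1 : x ∈ S i ⊓ S j := Submodule.mem_inf.2
      ⟨(hmemT i x).1 (Finset.mem_erase.1 hxi).2, (hmemT j x).1 (Finset.mem_erase.1 hxj).2⟩
    rw [hSdisj i j hij] at h1
    exact hx0 (Submodule.mem_bot _ |>.1 h1)
  have hUsum : ∑ x ∈ U, (χ (f x) - 1) * e x
      = ∑ i, ∑ x ∈ (T i).erase 0, (χ (f x) - 1) * e x := by
    rw [hU, Finset.sum_biUnion hdisj]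
  have hinner : ∀ i, ∑ x ∈ (T i).erase 0, (χ (f x) - 1) * e x
      = (χ (g i) - 1) * ((∑ x ∈ T i, e x) - 1) := by
    intro i
    have h1 : ∑ x ∈ (T i).erase 0, (χ (f x) - 1) * e x
        = ∑ x ∈ (T i).erase 0, (χ (g i) - 1) * e x := by
      refine Finset.sum_congr rfl fun x hx => ?_
      rw [hf1 i x ((hmemT i x).1 (Finset.mem_erase.1 hx).2) (Finset.mem_erase.1 hx).1]
    rw [h1, ← Finset.mul_sum]
    congr 1
    have := Finset.add_sum_erase (T i) e (h0T i)
    rw [e0] at this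
    linear_combination this
  -- character sum over B
  have hchi_ne : χ ≠ 0 := AddChar.ne_zero_iff.2 hχ
  have hchisum : ∑ γ : B, χ γ = 0 := AddChar.sum_eq_zero_iff_ne_zero.2 hchi_ne
  have hSg : ∑ i, χ (g i) = -(2 : ℂ) ^ (m - k) := by
    have h1 : ∑ γ : B, ∑ i ∈ Finset.univ.filter (fun i => g i = γ), χ γ = ∑ i, χ (g i) :=
      Finset.sum_fiberwise' Finset.univ g (fun γ => χ γ)
    rw [← h1]
    have h2 : ∀ γ : B, ∑ i ∈ Finset.univ.filter (fun i => g i = γ), χ γ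
        = ((Finset.univ.filter (fun i => g i = γ)).card : ℂ) * χ γ := by
      intro γ; rw [Finset.sum_const, nsmul_eq_mul]
    rw [Finset.sum_congr rfl fun γ _ => h2 γ]
    have h0 : ((Finset.univ.filter (fun i => g i = (0 : B))).card : ℂ) * χ 0 = 0 := by
      have : (Finset.univ.filter (fun i => g i = (0 : B))) = ∅ := by
        refine Finset.filter_false_of_mem fun i _ => hg0 i
      simp [this]
    rw [← Finset.add_sum_erase _ _ (Finset.mem_univ (0 : B)), h0, zero_add]
    have h3 : ∀ γ ∈ Finset.univ.erase (0 : B),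
        ((Finset.univ.filter (fun i => g i = γ)).card : ℂ) * χ γ
          = (2 : ℂ) ^ (m - k) * χ γ := by
      intro γ hγ
      rw [hgcount γ (Finset.mem_erase.1 hγ).1]
      push_cast; ring
    rw [Finset.sum_congr rfl h3, ← Finset.mul_sum]
    have h4 : ∑ γ ∈ Finset.univ.erase (0 : B), χ γ = -1 := by
      have := Finset.add_sum_erase Finset.univ χ (Finset.mem_univ (0 : B))
      rw [hchisum, AddChar.map_zero_eq_one] at this
      linear_combination this
    rw [h4]; ring
  -- cardinality facts
  have hNpos : 0 < (2 ^ k - 1) * 2 ^ (m - k) := by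
    have h1 : 0 < 2 ^ k - 1 := by
      have : 2 ≤ 2 ^ k := by
        calc 2 = 2 ^ 1 := (pow_one 2).symm
        _ ≤ 2 ^ k := Nat.pow_le_pow_right (by norm_num) hkpos
      omega
    positivity
  have hcastN : (((2 ^ k - 1) * 2 ^ (m - k) : ℕ) : ℂ) = (2 : ℂ) ^ m - (2 : ℂ) ^ (m - k) := by
    have h1 : (2 : ℕ) ^ (m - k) * 2 ^ k = 2 ^ m := by
      rw [← pow_add]; congr 1; omega
    have h3 : (2 ^ k - 1) * 2 ^ (m - k) = 2 ^ m - 2 ^ (m - k) := by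
      rw [Nat.sub_mul, one_mul, Nat.mul_comm, h1]
    have h4 : (2 : ℕ) ^ (m - k) ≤ 2 ^ m := Nat.pow_le_pow_right (by norm_num) (Nat.sub_le m k)
    rw [h3, Nat.cast_sub h4]
    push_cast
    ring
  -- put it together
  have main : ∑ x : (Fin (2 * m) → ZMod 2), χ (f x) * e x = 2 ^ m * χ γ₀ := by
    rw [split, hfull, zero_add, hrestrict, hUsum,
      Finset.sum_congr rfl fun i _ => hinner i]
    rw [← Finset.add_sum_erase _ _ (Finset.mem_univ i₀), hTi₀]
    have hrest : ∑ i ∈ Finset.univ.erase i₀, (χ (g i) - 1) * ((∑ x ∈ T i, e x) - 1)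
        = ∑ i ∈ Finset.univ.erase i₀, (-(χ (g i)) + 1) := by
      refine Finset.sum_congr rfl fun i hi => ?_
      rw [hTi i (Finset.mem_erase.1 hi).1]; ring
    rw [hrest, Finset.sum_add_distrib, Finset.sum_neg_distrib]
    have hsumrest : ∑ i ∈ Finset.univ.erase i₀, χ (g i) = -(2 : ℂ) ^ (m - k) - χ γ₀ := by
      have := Finset.add_sum_erase Finset.univ (fun i => χ (g i)) (Finset.mem_univ i₀)
      rw [hSg] at this
      rw [hγ₀]; linear_combination this
    have hcard : ((Finset.univ.erase i₀).card : ℂ) = (((2 ^ k - 1) * 2 ^ (m - k) : ℕ) : ℂ) - 1 := by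
      rw [Finset.card_erase_of_mem (Finset.mem_univ i₀), Finset.card_univ, Fintype.card_fin]
      rw [Nat.cast_sub hNpos]
      simp
    rw [hsumrest, Finset.sum_const, nsmul_eq_mul, mul_one, hcard, hcastN, hγ₀]
    ring
  refine ⟨main, ?_⟩
  rw [main]
  have habs : ‖χ γ₀‖ = 1 := by
    have hpow : χ γ₀ ^ (2 ^ k) = 1 := by
      rw [← AddChar.map_nsmul_eq_pow, ← hB, card_nsmul_eq_zero, AddChar.map_zero_eq_one]
    have h1 : ‖χ γ₀‖ ^ (2 ^ k) = 1 := by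
      rw [← norm_pow, hpow, norm_one]
    have hn : (2 : ℕ) ^ k ≠ 0 := by positivity
    have := Complex.norm_eq_one_of_pow_eq_one hpow hn
    exact this
  rw [norm_mul, habs, mul_one, norm_pow]
  simp
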